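/- arXiv:2604.19898 — 7 statements merged into one kernel-verified Lean document; each statement's English description precedes it below -/
import Mathlib

section
/- Let \Phi_1(q) be the unique formal power series with \Phi_1(0) = 1 satisfying q \Phi_1(q)^2 + (1 - q - q^2)\Phi_1(q) - 1 = 0, and let A(q) be the unique formal power series with A(0) = 1 satisfying q^2 A(q)^2 - (q^2 - q + 1) A(q) + 1 = 0. Then \Phi_1(q) = 1 + q - q\,A(-q). -/
open PowerSeries

theorem stmt_1 (Φ A : ℚ⟦X⟧)
    (hΦ0 : constantCoeff Φ = 1)
    (hΦ : X * Φ ^ 2 + (1 - X - X ^ 2) * Φ - 1 = 0)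
    (hΦuniq : ∀ G : ℚ⟦X⟧, constantCoeff G = 1 →
      X * G ^ 2 + (1 - X - X ^ 2) * G - 1 = 0 → G = Φ)
    (hA0 : constantCoeff A = 1)
    (hA : X ^ 2 * A ^ 2 - (X ^ 2 - X + 1) * A + 1 = 0)
    (hAuniq : ∀ G : ℚ⟦X⟧, constantCoeff G = 1 →
      X ^ 2 * G ^ 2 - (X ^ 2 - X + 1) * G + 1 = 0 → G = A) :
    Φ = 1 + X - X * PowerSeries.rescale (-1) A := by
  set B : ℚ⟦X⟧ := PowerSeries.rescale (-1) A with hBdef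
  have hB : X ^ 2 * B ^ 2 - (X ^ 2 + X + 1) * B + 1 = 0 := by
    have := congrArg (PowerSeries.rescale (-1 : ℚ)) hA
    simpa [map_add, map_sub, map_mul, map_pow, map_one, rescale_X] using this
  have hB0 : constantCoeff B = 1 := by
    rw [hBdef, ← coeff_zero_eq_constantCoeff, coeff_rescale]
    simpa using hA0
  have hG0 : constantCoeff (1 + X - X * B) = 1 := by
    simp [map_add, map_sub, map_mul]
  have hGeq : X * (1 + X - X * B) ^ 2 + (1 - X - X ^ 2) * (1 + X - X * B) - 1 = 0 := by
    linear_combination X * hB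
  exact (hΦuniq _ hG0 hGeq).symm
end

section
/- Define R_n(q) = q[n]_q + (q^n+1)(q-1) where [n]_q = 1+q+\cdots+q^{n-1}, and P_n(q) = R_n(q)^2 + 4q. Then for every integer n \geq 1, P_n(q) = (1 - q + q^2) Q_n(q), where Q_n(q) = [n+1]_q^2 - q[2n-1]_q + 2q^n. -/
open Polynomial

theorem stmt_5 (n : ℕ) (hn : 1 ≤ n)
    (qint : ℕ → Polynomial ℤ) (hqint : ∀ m, qint m = ∑ i ∈ Finset.range m, X ^ i)
    (R P Q : Polynomial ℤ)
    (hR : R = X * qint n + (X ^ n + 1) * (X - 1))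
    (hP : P = R ^ 2 + 4 * X)
    (hQ : Q = (qint (n + 1)) ^ 2 - X * qint (2 * n - 1) + 2 * X ^ n) :
    P = (1 - X + X ^ 2) * Q := by
  have hgeom : ∀ m : ℕ, qint m * (X - 1) = X ^ m - 1 := by
    intro m; rw [hqint]; exact geom_sum_mul X m
  have hne : ((X - 1 : Polynomial ℤ)) ^ 2 ≠ 0 := by
    apply pow_ne_zero
    simpa using Polynomial.X_sub_C_ne_zero (R := ℤ) 1
  apply mul_left_cancel₀ hne
  obtain ⟨k, rfl⟩ : ∃ k, n = k + 1 := ⟨n - 1, (Nat.succ_pred_eq_of_pos hn).symm⟩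
  have h1 : (X : Polynomial ℤ) ^ (k + 1) = X * X ^ k := by ring
  have h2 : 2 * (k + 1) - 1 = 2 * k + 1 := by omega
  have h3 : (X : Polynomial ℤ) ^ (2 * k + 1) = X * (X ^ k) ^ 2 := by
    rw [← pow_mul]; ring
  have h4 : (X : Polynomial ℤ) ^ (k + 1 + 1) = X ^ 2 * X ^ k := by ring
  have e1 := hgeom (k + 1)
  have e2 := hgeom (k + 1 + 1)
  have e3 := hgeom (2 * (k + 1) - 1)
  rw [h2, h3] at e3
  rw [h1] at e1
  rw [h4] at e2
  calc (X - 1) ^ 2 * P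
      = (X * (qint (k+1) * (X - 1)) + (X ^ (k+1) + 1) * (X - 1) ^ 2) ^ 2
        + 4 * X * (X - 1) ^ 2 := by rw [hP, hR]; ring
    _ = (X * (X * X ^ k - 1) + (X * X ^ k + 1) * (X - 1) ^ 2) ^ 2
        + 4 * X * (X - 1) ^ 2 := by rw [e1, h1]
    _ = (1 - X + X ^ 2) * ((X ^ 2 * X ^ k - 1) ^ 2
        - X * (X - 1) * (X * (X ^ k) ^ 2 - 1) + 2 * (X * X ^ k) * (X - 1) ^ 2) := by ring
    _ = (1 - X + X ^ 2) * ((qint (k+1+1) * (X - 1)) ^ 2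
        - X * (X - 1) * (qint (2 * (k+1) - 1) * (X - 1)) + 2 * X ^ (k+1) * (X - 1) ^ 2) := by
        rw [e2, h2, e3, h1]
    _ = (X - 1) ^ 2 * ((1 - X + X ^ 2) * Q) := by rw [hQ]; ring
end

section
/- Let \kappa_l denote the coefficients of \Phi_1, the unique power series with \Phi_1(0)=1 satisfying q\Phi_1^2+(1-q-q^2)\Phi_1-1=0. Then for all l \geq 4, (l+1)\kappa_l + (2l-1)\kappa_{l-1} - (l-2)\kappa_{l-2} + (2l-7)\kappa_{l-3} + (l-5)\kappa_{l-4} = 0. -/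
open PowerSeries

theorem stmt_7 (Φ : ℚ⟦X⟧)
    (hΦ0 : constantCoeff Φ = 1)
    (hΦ : X * Φ ^ 2 + (1 - X - X ^ 2) * Φ - 1 = 0) :
    ∀ l : ℕ, 4 ≤ l →
      ((l : ℚ) + 1) * coeff l Φ + (2 * (l : ℚ) - 1) * coeff (l - 1) Φ
        - ((l : ℚ) - 2) * coeff (l - 2) Φ + (2 * (l : ℚ) - 7) * coeff (l - 3) Φ
        + ((l : ℚ) - 5) * coeff (l - 4) Φ = 0 := by
  set D := derivative ℚ Φ with hDdef
  have hD : Φ ^ 2 + 2 * X * Φ * D + (-1 - 2 * X) * Φ + (1 - X - X ^ 2) * D = 0 := by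
    have h := congrArg (derivative ℚ) hΦ
    simp only [map_add, map_sub, Derivation.leibniz, Derivation.leibniz_pow, derivative_X,
      Derivation.map_one_eq_zero, map_zero, nsmul_eq_mul, smul_eq_mul, pow_one, mul_one, one_mul] at h
    linear_combination h
  have Hode : X ^ 1 * D + (X ^ 2 * D + X ^ 2 * D) - X ^ 3 * D + (X ^ 4 * D + X ^ 4 * D)
      + X ^ 5 * D + Φ + X ^ 1 * Φ - X ^ 3 * Φ - X ^ 4 * Φ
      = 1 + X + (X ^ 2 + X ^ 2 + X ^ 2) := by
    linear_combination (-(4 * X ^ 2 * D + 2 * X * Φ - 1 - X - 3 * X ^ 2)) * hΦ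
      + (X * (2 * X * Φ + 1 - X - X ^ 2)) * hD
  intro l hl
  obtain ⟨m, rfl⟩ := Nat.exists_eq_add_of_le hl
  rcases m with _ | k
  · have h := congrArg (coeff 4) Hode
    simp only [map_add, map_sub, map_mul, map_one, coeff_X_pow_mul'] at h
    norm_num [hDdef, coeff_derivative, coeff_X, coeff_X_pow, coeff_one] at h ⊢
    linarith [h, hΦ0]
  · have h5 : 4 + (k + 1) = k + 5 := by omega
    rw [h5]
    have h := congrArg (coeff (k + 5)) Hode
    simp only [map_add, map_sub, coeff_X_pow_mul'] at h
    rw [if_pos (by omega : 1 ≤ k + 5), if_pos (by omega : 2 ≤ k + 5),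
      if_pos (by omega : 3 ≤ k + 5), if_pos (by omega : 4 ≤ k + 5),
      if_pos (by omega : 5 ≤ k + 5)] at h
    rw [show k + 5 - 1 = k + 4 by omega, show k + 5 - 2 = k + 3 by omega,
      show k + 5 - 3 = k + 2 by omega, show k + 5 - 4 = k + 1 by omega,
      show k + 5 - 5 = k by omega] at h
    simp only [hDdef, coeff_derivative] at h
    rw [coeff_one, if_neg (by omega : ¬ (k + 5 = 0)), coeff_X,
      if_neg (by omega : ¬ (k + 5 = 1)), coeff_X_pow,
      if_neg (by omega : ¬ (k + 5 = 2))] at h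
    norm_num at h
    rw [show k + 5 - 1 = k + 4 by omega, show k + 5 - 2 = k + 3 by omega,
      show k + 5 - 3 = k + 2 by omega, show k + 5 - 4 = k + 1 by omega]
    push_cast at h ⊢
    linarith [h]
end

section
/- Let \kappa_l denote the coefficients of \Phi_2, the unique power series with \Phi_2(0)=1 satisfying q\Phi_2^2+(1-2q-q^3)\Phi_2-1=0. Then for all l \geq 6, (l+1)\kappa_l + 4(l-2)\kappa_{l-2} - (2l-7)\kappa_{l-3} + 4(l-5)\kappa_{l-4} + (l-8)\kappa_{l-6} = 0. -/
open PowerSeries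

private lemma aux_dcoeff (f : ℚ⟦X⟧) (m k : ℕ) :
    coeff (k + m) (X ^ (m + 1) * d⁄dX ℚ f) = (k : ℚ) * coeff k f := by
  cases k with
  | zero =>
    simp only [Nat.zero_add, Nat.cast_zero, zero_mul]
    rw [coeff_X_pow_mul']
    simp [Nat.lt_succ_self]
  | succ j =>
    have e : j + 1 + m = j + (m + 1) := by ring
    rw [e, coeff_X_pow_mul, coeff_derivative]
    push_cast; ring

private lemma aux_coeff (f : ℚ⟦X⟧) (m k : ℕ) :
    coeff (k + m) (X ^ m * f) = coeff k f :=
  coeff_X_pow_mul f m k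

theorem stmt_8 (Φ : ℚ⟦X⟧)
    (hΦ0 : constantCoeff Φ = 1)
    (hΦ : X * Φ ^ 2 + (1 - 2 * X - X ^ 3) * Φ - 1 = 0) :
    ∀ l : ℕ, 6 ≤ l →
      ((l : ℚ) + 1) * coeff l Φ + 4 * ((l : ℚ) - 2) * coeff (l - 2) Φ
        - (2 * (l : ℚ) - 7) * coeff (l - 3) Φ + 4 * ((l : ℚ) - 5) * coeff (l - 4) Φ
        + ((l : ℚ) - 8) * coeff (l - 6) Φ = 0 := by
  have hE' : Φ^2 + 2*X*Φ*(d⁄dX ℚ Φ) + (-2-3*X^2)*Φ + (1-2*X-X^3)*(d⁄dX ℚ Φ) = 0 := by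
    have h0 := congrArg (d⁄dX ℚ) hΦ
    simp only [Derivation.leibniz, Derivation.leibniz_pow, map_add, map_sub, map_one, map_zero,
      derivative_X, smul_eq_mul, nsmul_eq_mul, Nat.cast_ofNat, Derivation.map_one_eq_zero,
      show (d⁄dX ℚ) 2 = 0 from by
        rw [show (2:ℚ⟦X⟧) = ((2:ℕ):ℚ⟦X⟧) by norm_num]; exact Derivation.map_natCast _ 2] at h0
    linear_combination h0
  have key : X^1*(d⁄dX ℚ Φ) + 4*(X^3*(d⁄dX ℚ Φ)) - 2*(X^4*(d⁄dX ℚ Φ)) + 4*(X^5*(d⁄dX ℚ Φ))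
      + X^7*(d⁄dX ℚ Φ) + Φ + X^3*Φ - 4*(X^4*Φ) - 2*(X^6*Φ) = 1 + 2*X + 5*X^3 := by
    linear_combination (1 + 2*X - 2*X*Φ - 4*X^2*(d⁄dX ℚ Φ) + 5*X^3) * hΦ
      + (2*X^2*Φ + X - 2*X^2 - X^4) * hE'
  intro l hl
  obtain ⟨k, rfl⟩ := Nat.exists_eq_add_of_le hl
  have hc := congrArg (coeff (6 + k)) key
  simp only [map_add, map_sub,
    show (4:ℚ⟦X⟧) = C (4:ℚ) from (map_ofNat (C) 4).symm,
    show (2:ℚ⟦X⟧) = C (2:ℚ) from (map_ofNat (C) 2).symm,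
    show (5:ℚ⟦X⟧) = C (5:ℚ) from (map_ofNat (C) 5).symm,
    coeff_C_mul] at hc
  have e1 : 6 + k = (6 + k) + 0 := by ring
  have e2 : 6 + k = (k + 4) + 2 := by ring
  have e3 : 6 + k = (k + 3) + 3 := by ring
  have e4 : 6 + k = (k + 2) + 4 := by ring
  have e5 : 6 + k = k + 6 := by ring
  rw [show coeff (6+k) (X^1*(d⁄dX ℚ Φ)) = ((6+k : ℕ) : ℚ) * coeff (6+k) Φ from by
        rw [e1]; exact aux_dcoeff Φ 0 (6+k),
      show coeff (6+k) (X^3*(d⁄dX ℚ Φ)) = ((k+4 : ℕ) : ℚ) * coeff (k+4) Φ from by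
        rw [e2]; exact aux_dcoeff Φ 2 (k+4),
      show coeff (6+k) (X^4*(d⁄dX ℚ Φ)) = ((k+3 : ℕ) : ℚ) * coeff (k+3) Φ from by
        rw [e3]; exact aux_dcoeff Φ 3 (k+3),
      show coeff (6+k) (X^5*(d⁄dX ℚ Φ)) = ((k+2 : ℕ) : ℚ) * coeff (k+2) Φ from by
        rw [e4]; exact aux_dcoeff Φ 4 (k+2),
      show coeff (6+k) (X^7*(d⁄dX ℚ Φ)) = ((k : ℕ) : ℚ) * coeff k Φ from by
        rw [e5]; exact aux_dcoeff Φ 6 k,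
      show coeff (6+k) (X^3*Φ) = coeff (k+3) Φ from by rw [e3]; exact aux_coeff Φ 3 (k+3),
      show coeff (6+k) (X^4*Φ) = coeff (k+2) Φ from by rw [e4]; exact aux_coeff Φ 4 (k+2),
      show coeff (6+k) (X^6*Φ) = coeff k Φ from by rw [e5]; exact aux_coeff Φ 6 k,
      show coeff (6+k) (1:ℚ⟦X⟧) = 0 from by rw [coeff_one, if_neg (by omega)],
      show coeff (6+k) (X:ℚ⟦X⟧) = 0 from by rw [coeff_X, if_neg (by omega)],
      show coeff (6+k) (X^3:ℚ⟦X⟧) = 0 from by rw [coeff_X_pow, if_neg (by omega)]] at hc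
  have s2 : 6 + k - 2 = k + 4 := by omega
  have s3 : 6 + k - 3 = k + 3 := by omega
  have s4 : 6 + k - 4 = k + 2 := by omega
  have s6 : 6 + k - 6 = k := by omega
  rw [s2, s3, s4, s6]
  push_cast at hc ⊢
  linear_combination hc
end

section
/- Let n \geq 1, R_n(q) = q[n]_q + (q^n+1)(q-1), and let \Phi_n be the unique formal power series with \Phi_n(0)=1 satisfying q\Phi_n^2 = R_n\Phi_n + 1. Then \Phi_n satisfies the linear differential equation q(R_n^2 + 4q)\Phi_n' + (R_n^2 - q R_n R_n' + 2q)\Phi_n + R_n - 2qR_n' = 0, where ' denotes formal differentiation with respect to q. -/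
open PowerSeries

theorem stmt_9 (n : ℕ) (hn : 1 ≤ n) (R Φ : ℚ⟦X⟧)
    (hR : R = X * (∑ i ∈ Finset.range n, X ^ i) + (X ^ n + 1) * (X - 1))
    (hΦ0 : constantCoeff Φ = 1)
    (hΦ : X * Φ ^ 2 = R * Φ + 1) :
    X * (R ^ 2 + 4 * X) * (d⁄dX ℚ Φ)
      + (R ^ 2 - X * R * (d⁄dX ℚ R) + 2 * X) * Φ + R - 2 * X * (d⁄dX ℚ R) = 0 := by
  have h1 := congrArg (d⁄dX ℚ) hΦ
  simp only [pow_two, Derivation.leibniz, Derivation.map_one_eq_zero, smul_eq_mul, derivative_X, map_add] at h1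
  set Φ' := d⁄dX ℚ Φ
  set R' := d⁄dX ℚ R
  linear_combination (2*X*R' - R - 2*X*Φ - 4*X^2*Φ') * hΦ + (2*X^2*Φ - X*R) * h1
end

section
/- Let \Phi_1 be the unique formal power series with \Phi_1(0)=1 satisfying q\Phi_1^2 + (1-q-q^2)\Phi_1 - 1 = 0. Then q(1-q+q^2)(1+3q+q^2)\Phi_1'(q) + (1+q)(1-q^3)\Phi_1(q) = 1 + q + 3q^2. -/
open PowerSeries

theorem stmt_10 (Φ : ℚ⟦X⟧)
    (hΦ0 : constantCoeff Φ = 1)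
    (hΦ : X * Φ ^ 2 + (1 - X - X ^ 2) * Φ - 1 = 0) :
    X * (1 - X + X ^ 2) * (1 + 3 * X + X ^ 2) * (d⁄dX ℚ Φ)
      + (1 + X) * (1 - X ^ 3) * Φ = 1 + X + 3 * X ^ 2 := by
  have hd : Φ ^ 2 + 2 * X * Φ * (d⁄dX ℚ Φ) + (-1 - 2 * X) * Φ
      + (1 - X - X ^ 2) * (d⁄dX ℚ Φ) = 0 := by
    have h := congrArg (d⁄dX ℚ) hΦ
    simp only [map_add, map_sub, Derivation.leibniz, Derivation.leibniz_pow,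
      derivative_X, Derivation.map_one_eq_zero, map_one, map_zero, smul_eq_mul, map_pow] at h
    ring_nf at h ⊢
    linear_combination h
  set u : ℚ⟦X⟧ := 2 * X * Φ + (1 - X - X ^ 2) with hu
  have hune : u ≠ 0 := by
    intro h
    have := congrArg (constantCoeff (R := ℚ)) h
    simp [hu, hΦ0] at this
  apply mul_right_cancel₀ hune
  linear_combination (X * (1 - X + X ^ 2) * (1 + 3 * X + X ^ 2)) * hd
    + (1 + X ^ 2 - 4 * X ^ 3 - 3 * X ^ 4) * hΦ
end

section
/- Let (a_l) be defined by a_0 = a_1 = 1 and a_{l+1} = a_l + \sum_{j=0}^{l-2} a_j a_{l-1-j}. Then for all l \geq 4, (l+2)a_l - (2l+1)a_{l-1} - (l-1)a_{l-2} - (2l-5)a_{l-3} + (l-4)a_{l-4} = 0. -/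
open PowerSeries

theorem stmt_13 (a : ℕ → ℚ) (h0 : a 0 = 1) (h1 : a 1 = 1)
    (hrec : ∀ l ≥ 1, a (l + 1) = a l + ∑ j ∈ Finset.range (l - 1), a j * a (l - 1 - j)) :
    ∀ l : ℕ, 4 ≤ l →
      ((l : ℚ) + 2) * a l - (2 * (l : ℚ) + 1) * a (l - 1) - ((l : ℚ) - 1) * a (l - 2)
        - (2 * (l : ℚ) - 5) * a (l - 3) + ((l : ℚ) - 4) * a (l - 4) = 0 := by
  set f : ℚ⟦X⟧ := PowerSeries.mk a with hf
  -- the algebraic (quadratic) equation for f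
  have hS : (X : ℚ⟦X⟧)^2 * (f * f) + X * f + 1 = f + X^2 * f := by
    ext n
    rcases n with _ | _ | m
    · simp [hf, h0]
    · simp [hf, h0, h1, coeff_succ_X_mul, coeff_X_pow_mul']
    · have e1 : (coeff (R := ℚ) (m+2)) ((X:ℚ⟦X⟧)^2 * (f*f)) = coeff (R := ℚ) m (f*f) :=
        coeff_X_pow_mul (f*f) 2 m
      have e2 : (coeff (R := ℚ) (m+2)) ((X:ℚ⟦X⟧)^2 * f) = coeff (R := ℚ) m f :=
        coeff_X_pow_mul f 2 m
      have e3 : (coeff (R := ℚ) (m+2)) ((X:ℚ⟦X⟧) * f) = coeff (R := ℚ) (m+1) f :=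
        coeff_succ_X_mul (m+1) f
      have hr := hrec (m+1) (by omega)
      simp only [Nat.add_sub_cancel] at hr
      have e4 : coeff (R := ℚ) m (f*f) = ∑ j ∈ Finset.range (m+1), a j * a (m - j) := by
        rw [coeff_mul, Finset.Nat.sum_antidiagonal_eq_sum_range_succ_mk]
        simp [hf]
      rw [show m + 1 + 1 = m + 2 from rfl, map_add, map_add, map_add, e1, e2, e3, e4]
      simp only [map_add, e1, e2, e3, e4, hf, coeff_mk, coeff_one, Nat.add_eq_zero]
      rw [Finset.sum_range_succ, hr]
      simp [Nat.sub_self, h0]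
      ring
  have hE : d⁄dX ℚ ((X : ℚ⟦X⟧)^2 * (f * f) + X * f + 1) = d⁄dX ℚ (f + X^2 * f) := by
    rw [hS]
  simp only [map_add, Derivation.leibniz, Derivation.leibniz_pow, derivative_X,
    Derivation.map_one_eq_zero, smul_eq_mul, nsmul_eq_mul, mul_one, add_zero] at hE
  set D : ℚ⟦X⟧ := d⁄dX ℚ f with hD
  have hG : (X:ℚ⟦X⟧) * (1 - 2*X - X^2 - 2*X^3 + X^4) * D
      = (X^3 + X^2 + 3*X - 2) * f + (2 - 2*X^2) := by
    linear_combination (X * (2*(X:ℚ⟦X⟧)^2*f - 1 + X - X^2)) * hE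
      - (2*(2*(X:ℚ⟦X⟧)^2*f - 1 + X - X^2) + 4*X^3*D - 2*X + 4) * hS
  have hG2 : (X:ℚ⟦X⟧)*D + X^5*D + (f + f) + (X^2 + X^2)
      = (X^2*D + X^2*D) + X^3*D + (X^4*D + X^4*D) + X^3*f + X^2*f + (X*f + X*f + X*f)
        + ((1:ℚ⟦X⟧) + 1) := by
    linear_combination hG
  have key : ∀ m : ℕ, a (m+4) * ((m:ℚ)+4) + a m * (m:ℚ) + 2 * a (m+4)
      = 2 * (a (m+3) * ((m:ℚ)+3)) + a (m+2) * ((m:ℚ)+2) + 2 * (a (m+1) * ((m:ℚ)+1))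
        + a (m+1) + a (m+2) + 3 * a (m+3) := by
    intro m
    have h := congrArg (coeff (R := ℚ) (m+4)) hG2
    simp only [map_add] at h
    have c1 : coeff (R := ℚ) (m+4) ((X:ℚ⟦X⟧)*D) = a (m+4) * ((m:ℚ)+4) := by
      rw [show m+4 = (m+3)+1 by omega, coeff_succ_X_mul, hD, coeff_derivative, hf, coeff_mk]
      push_cast; ring
    have c2 : coeff (R := ℚ) (m+4) ((X:ℚ⟦X⟧)^2*D) = a (m+3) * ((m:ℚ)+3) := by
      rw [show m+4 = (m+2)+2 by omega, coeff_X_pow_mul, hD, coeff_derivative, hf, coeff_mk]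
      push_cast; ring
    have c3 : coeff (R := ℚ) (m+4) ((X:ℚ⟦X⟧)^3*D) = a (m+2) * ((m:ℚ)+2) := by
      rw [show m+4 = (m+1)+3 by omega, coeff_X_pow_mul, hD, coeff_derivative, hf, coeff_mk]
      push_cast; ring
    have c4 : coeff (R := ℚ) (m+4) ((X:ℚ⟦X⟧)^4*D) = a (m+1) * ((m:ℚ)+1) := by
      rw [coeff_X_pow_mul, hD, coeff_derivative, hf, coeff_mk]
    have c5 : coeff (R := ℚ) (m+4) ((X:ℚ⟦X⟧)^5*D) = a m * (m:ℚ) := by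
      rcases m with _ | k
      · rw [coeff_X_pow_mul']
        norm_num
      · rw [show k+1+4 = k+5 by omega, coeff_X_pow_mul, hD, coeff_derivative, hf, coeff_mk]
        push_cast; ring
    have c6 : coeff (R := ℚ) (m+4) f = a (m+4) := by rw [hf, coeff_mk]
    have c7 : coeff (R := ℚ) (m+4) ((X:ℚ⟦X⟧)*f) = a (m+3) := by
      rw [show m+4 = (m+3)+1 by omega, coeff_succ_X_mul, hf, coeff_mk]
    have c8 : coeff (R := ℚ) (m+4) ((X:ℚ⟦X⟧)^2*f) = a (m+2) := by
      rw [show m+4 = (m+2)+2 by omega, coeff_X_pow_mul, hf, coeff_mk]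
    have c9 : coeff (R := ℚ) (m+4) ((X:ℚ⟦X⟧)^3*f) = a (m+1) := by
      rw [show m+4 = (m+1)+3 by omega, coeff_X_pow_mul, hf, coeff_mk]
    have c10 : coeff (R := ℚ) (m+4) ((X:ℚ⟦X⟧)^2) = 0 := by
      rw [coeff_X_pow, if_neg (by omega)]
    have c11 : coeff (R := ℚ) (m+4) (1:ℚ⟦X⟧) = 0 := by
      rw [coeff_one, if_neg (by omega)]
    rw [c1, c2, c3, c4, c5, c6, c7, c8, c9, c10, c11] at h
    linarith
  intro l hl
  obtain ⟨m, rfl⟩ : ∃ m, l = m + 4 := ⟨l - 4, by omega⟩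
  have hk := key m
  simp only [show m+4-1 = m+3 by omega, show m+4-2 = m+2 by omega,
    show m+4-3 = m+1 by omega, show m+4-4 = m by omega]
  push_cast
  linarith
end
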